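/- Let γ be a nonzero real number. Define functions p_n : ℝ → ℝ (n = 0, 1, 2, …) by p_{2n}(x) = ((−γ)^n/√(n!))·C_n(x²; γ²) and p_{2n+1}(x) = −((−γ)^{n−1}/√(n!))·x·C_n(x²−1; γ²). Then p_{−1} = 0, p_0 = 1, and for all n ≥ 0 and all real x the recurrence relations hold: x·p_{2n}(x) = √n·p_{2n−1}(x) + γ·p_{2n+1}(x) and x·p_{2n+1}(x) = γ·p_{2n}(x) + √(n+1)·p_{2n+2}(x). (Equivalently, with c_{2m} = γ and c_{2m+1} = √(m+1), one has c_{m−1} p_{m−1}(x) + c_m p_{m+1}(x) = x·p_m(x) for all m ≥ 0, where the term with index −1 is omitted.) -/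

import Mathlib

/-- The Charlier polynomial `C_n(x; a) = ₂F₀(-n, -x; —; -1/a)
  = ∑_{k=0}^{n} (n choose k)·x(x-1)⋯(x-k+1)·(-1/a)^k`,
  regarded as a polynomial function of a real variable `x`. -/
noncomputable def charlier (a : ℝ) (n : ℕ) (x : ℝ) : ℝ :=
  ∑ k ∈ Finset.range (n + 1),
    (n.choose k : ℝ) * (∏ j ∈ Finset.range k, (x - (j : ℝ))) * (-1 / a) ^ k

lemma charlier_zero (a y : ℝ) : charlier a 0 y = 1 := by simp [charlier]

lemma prod_shift (k : ℕ) (y : ℝ) :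
    ∏ j ∈ Finset.range (k + 1), (y - (j : ℝ)) =
      y * ∏ j ∈ Finset.range k, (y - 1 - (j : ℝ)) := by
  rw [Finset.prod_range_succ']
  simp only [Nat.cast_zero, sub_zero]
  rw [mul_comm]
  congr 1
  refine Finset.prod_congr rfl fun j _ => ?_
  push_cast
  ring

lemma prod_diff (k : ℕ) (y : ℝ) :
    (∏ j ∈ Finset.range (k + 1), (y - (j : ℝ))) -
        (∏ j ∈ Finset.range (k + 1), (y - 1 - (j : ℝ))) =
      ((k : ℝ) + 1) * ∏ j ∈ Finset.range k, (y - 1 - (j : ℝ)) := by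
  rw [prod_shift, Finset.prod_range_succ]
  ring

lemma charlier_rec (a : ℝ) (ha : a ≠ 0) (n : ℕ) (y : ℝ) :
    a * charlier a (n + 1) y = a * charlier a n y - y * charlier a n (y - 1) := by
  have har : a * (-1 / a) = -1 := by field_simp
  have hB : a * charlier a n y =
      a - ∑ k ∈ Finset.range (n + 1),
        (n.choose (k + 1) : ℝ) * (y * ∏ j ∈ Finset.range k, (y - 1 - (j : ℝ))) * (-1 / a) ^ k := by
    rw [charlier, Finset.sum_range_succ', Finset.sum_range_succ]
    simp only [Nat.choose_succ_self, Nat.cast_zero, Nat.cast_one, Nat.choose_zero_right,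
      Finset.range_zero, Finset.prod_empty, pow_zero, mul_one, Nat.cast_ofNat,
      Nat.cast_zero, zero_mul, mul_zero, add_zero]
    rw [mul_add, mul_one, Finset.mul_sum]
    have : ∀ k ∈ Finset.range n,
        a * ((n.choose (k + 1) : ℝ) * (∏ j ∈ Finset.range (k + 1), (y - (j : ℝ))) * (-1 / a) ^ (k + 1))
          = -((n.choose (k + 1) : ℝ) * (y * ∏ j ∈ Finset.range k, (y - 1 - (j : ℝ))) * (-1 / a) ^ k) := by
      intro k _
      rw [prod_shift, pow_succ]
      calc a * ((n.choose (k + 1) : ℝ) * (y * ∏ j ∈ Finset.range k, (y - 1 - (j : ℝ))) * ((-1 / a) ^ k * (-1 / a)))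
          = (n.choose (k + 1) : ℝ) * (y * ∏ j ∈ Finset.range k, (y - 1 - (j : ℝ))) * ((-1 / a) ^ k * (a * (-1 / a))) := by ring
        _ = -((n.choose (k + 1) : ℝ) * (y * ∏ j ∈ Finset.range k, (y - 1 - (j : ℝ))) * (-1 / a) ^ k) := by rw [har]; ring
    rw [Finset.sum_congr rfl this]
    rw [Finset.sum_neg_distrib]
    ring
  have hA : a * charlier a (n + 1) y =
      a - y * charlier a n (y - 1) - ∑ k ∈ Finset.range (n + 1),
        (n.choose (k + 1) : ℝ) * (y * ∏ j ∈ Finset.range k, (y - 1 - (j : ℝ))) * (-1 / a) ^ k := by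
    rw [charlier, Finset.sum_range_succ']
    simp only [Nat.choose_zero_right, Nat.cast_one, Finset.range_zero, Finset.prod_empty,
      pow_zero, mul_one, one_mul]
    rw [mul_add, mul_one, Finset.mul_sum]
    have : ∀ k ∈ Finset.range (n + 1),
        a * (((n + 1).choose (k + 1) : ℝ) * (∏ j ∈ Finset.range (k + 1), (y - (j : ℝ))) * (-1 / a) ^ (k + 1))
          = -((n.choose k : ℝ) * (y * ∏ j ∈ Finset.range k, (y - 1 - (j : ℝ))) * (-1 / a) ^ k)
            + -((n.choose (k + 1) : ℝ) * (y * ∏ j ∈ Finset.range k, (y - 1 - (j : ℝ))) * (-1 / a) ^ k) := by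
      intro k _
      rw [prod_shift, pow_succ, Nat.choose_succ_succ]
      push_cast
      calc a * (((n.choose k : ℝ) + (n.choose (k + 1) : ℝ)) * (y * ∏ j ∈ Finset.range k, (y - 1 - (j : ℝ))) * ((-1 / a) ^ k * (-1 / a)))
          = ((n.choose k : ℝ) + (n.choose (k + 1) : ℝ)) * (y * ∏ j ∈ Finset.range k, (y - 1 - (j : ℝ))) * ((-1 / a) ^ k * (a * (-1 / a))) := by ring
        _ = _ := by rw [har]; ring
    rw [Finset.sum_congr rfl this, Finset.sum_add_distrib, Finset.sum_neg_distrib, Finset.sum_neg_distrib]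
    have hodd : charlier a n (y - 1) =
        ∑ k ∈ Finset.range (n + 1), (n.choose k : ℝ) * (∏ j ∈ Finset.range k, (y - 1 - (j : ℝ))) * (-1 / a) ^ k := rfl
    rw [hodd, Finset.mul_sum]
    have h2 : ∑ i ∈ Finset.range (n + 1),
        y * (((n.choose i : ℝ) * ∏ j ∈ Finset.range i, (y - 1 - (j : ℝ))) * (-1 / a) ^ i)
        = ∑ i ∈ Finset.range (n + 1),
          (n.choose i : ℝ) * (y * ∏ j ∈ Finset.range i, (y - 1 - (j : ℝ))) * (-1 / a) ^ i :=
      Finset.sum_congr rfl fun i _ => by ring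
    rw [h2]; ring
  rw [hA, hB]; ring

lemma charlier_diff (a : ℝ) (ha : a ≠ 0) (n : ℕ) (y : ℝ) :
    a * (charlier a (n + 1) y - charlier a (n + 1) (y - 1)) =
      -(((n : ℝ) + 1) * charlier a n (y - 1)) := by
  have har : a * (-1 / a) = -1 := by field_simp
  rw [charlier, charlier, ← Finset.sum_sub_distrib, Finset.mul_sum, Finset.sum_range_succ']
  have hterm : ∀ k ∈ Finset.range (n + 1),
      a * (((n + 1).choose (k + 1) : ℝ) * (∏ j ∈ Finset.range (k + 1), (y - (j : ℝ))) * (-1 / a) ^ (k + 1)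
          - ((n + 1).choose (k + 1) : ℝ) * (∏ j ∈ Finset.range (k + 1), (y - 1 - (j : ℝ))) * (-1 / a) ^ (k + 1))
        = -(((n : ℝ) + 1) * ((n.choose k : ℝ) * (∏ j ∈ Finset.range k, (y - 1 - (j : ℝ))) * (-1 / a) ^ k)) := by
    intro k _
    have hd := prod_diff k y
    have hc : ((n : ℝ) + 1) * (n.choose k : ℝ) = ((n + 1).choose (k + 1) : ℝ) * ((k : ℝ) + 1) := by
      have := Nat.add_one_mul_choose_eq n k
      exact_mod_cast congrArg (Nat.cast : ℕ → ℝ) this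
    calc a * (((n + 1).choose (k + 1) : ℝ) * (∏ j ∈ Finset.range (k + 1), (y - (j : ℝ))) * (-1 / a) ^ (k + 1)
          - ((n + 1).choose (k + 1) : ℝ) * (∏ j ∈ Finset.range (k + 1), (y - 1 - (j : ℝ))) * (-1 / a) ^ (k + 1))
        = ((n + 1).choose (k + 1) : ℝ) *
            ((∏ j ∈ Finset.range (k + 1), (y - (j : ℝ))) - ∏ j ∈ Finset.range (k + 1), (y - 1 - (j : ℝ))) *
            ((a * (-1 / a)) * (-1 / a) ^ k) := by rw [pow_succ]; ring
      _ = (((n + 1).choose (k + 1) : ℝ) * ((k : ℝ) + 1)) *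
            (∏ j ∈ Finset.range k, (y - 1 - (j : ℝ))) * ((-1) * (-1 / a) ^ k) := by
          rw [hd, har]; ring
      _ = _ := by rw [← hc]; ring
  rw [Finset.sum_congr rfl hterm, Finset.sum_neg_distrib]
  have hodd : charlier a n (y - 1) =
      ∑ k ∈ Finset.range (n + 1), (n.choose k : ℝ) * (∏ j ∈ Finset.range k, (y - 1 - (j : ℝ))) * (-1 / a) ^ k := rfl
  rw [hodd, Finset.mul_sum, ← Finset.sum_neg_distrib]
  simp

/-- For `γ ≠ 0`, the polynomials `p_{2n}(x) = ((-γ)^n/√(n!))·C_n(x²; γ²)` and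
`p_{2n+1}(x) = -((-γ)^{n-1}/√(n!))·x·C_n(x²-1; γ²)` satisfy `p_0 = 1` and the
recurrence relations `x·p_{2n}(x) = √n·p_{2n-1}(x) + γ·p_{2n+1}(x)` and
`x·p_{2n+1}(x) = γ·p_{2n}(x) + √(n+1)·p_{2n+2}(x)` (term with index `-1` omitted). -/
theorem charlier_solve_recurrence (γ : ℝ) (hγ : γ ≠ 0) (p : ℕ → ℝ → ℝ)
    (hpeven : ∀ (n : ℕ) (x : ℝ),
      p (2 * n) x = ((-γ) ^ n / Real.sqrt (n.factorial : ℝ)) * charlier (γ ^ 2) n (x ^ 2))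
    (hpodd : ∀ (n : ℕ) (x : ℝ),
      p (2 * n + 1) x =
        -(((-γ) ^ ((n : ℤ) - 1) / Real.sqrt (n.factorial : ℝ)) * x *
          charlier (γ ^ 2) n (x ^ 2 - 1))) :
    (∀ x : ℝ, p 0 x = 1) ∧
    (∀ (n : ℕ) (x : ℝ), x * p (2 * n) x =
      Real.sqrt (n : ℝ) * (if n = 0 then (0 : ℝ) else p (2 * n - 1) x) + γ * p (2 * n + 1) x) ∧
    (∀ (n : ℕ) (x : ℝ), x * p (2 * n + 1) x =
      γ * p (2 * n) x + Real.sqrt ((n : ℝ) + 1) * p (2 * n + 2) x) := by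
  have hγ2 : γ ^ 2 ≠ 0 := pow_ne_zero 2 hγ
  have hnγ : -γ ≠ 0 := neg_ne_zero.2 hγ
  have hz : ∀ k : ℕ, (-γ) ^ ((k : ℤ) - 1) = (-γ) ^ k / (-γ) := by
    intro k
    rw [zpow_sub₀ hnγ, zpow_natCast, zpow_one]
  have hfac : ∀ m : ℕ, Real.sqrt ((m + 1).factorial : ℝ)
      = Real.sqrt ((m : ℝ) + 1) * Real.sqrt (m.factorial : ℝ) := by
    intro m
    rw [Nat.factorial_succ]
    push_cast
    rw [Real.sqrt_mul (by positivity)]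
  have hp0 : ∀ x : ℝ, p 0 x = 1 := by
    intro x
    have h := hpeven 0 x
    simpa [charlier_zero, Nat.factorial] using h
  refine ⟨hp0, ?_, ?_⟩
  · intro n x
    match n with
    | 0 =>
      rw [if_pos rfl, hpeven 0 x, hpodd 0 x, hz 0, charlier_zero, charlier_zero]
      simp [Nat.factorial]
      field_simp
    | Nat.succ m =>
      rw [if_neg (Nat.succ_ne_zero m)]
      rw [show 2 * (m + 1) - 1 = 2 * m + 1 by omega]
      rw [hpeven (m + 1) x, hpodd m x, hpodd (m + 1) x, hz m, hz (m + 1), hfac m]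
      have hs2 : Real.sqrt ((m : ℝ) + 1) * Real.sqrt ((m : ℝ) + 1) = (m : ℝ) + 1 :=
        Real.mul_self_sqrt (by positivity)
      have ht : Real.sqrt (m.factorial : ℝ) ≠ 0 := by positivity
      have hs : Real.sqrt ((m : ℝ) + 1) ≠ 0 := by positivity
      have key := charlier_diff (γ ^ 2) hγ2 m (x ^ 2)
      push_cast
      field_simp
      linear_combination
        (-(x * (-γ) ^ m)) * key
        + (-(x * (-γ) ^ m) * charlier (γ ^ 2) m (x ^ 2 - 1)) * hs2
  · intro n x
    have hE := hpeven (n + 1) x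
    rw [show 2 * (n + 1) = 2 * n + 2 by omega] at hE
    rw [hpodd n x, hpeven n x, hE, hz n, hfac n]
    have ht : Real.sqrt (n.factorial : ℝ) ≠ 0 := by positivity
    have hs : Real.sqrt ((n : ℝ) + 1) ≠ 0 := by positivity
    have key := charlier_rec (γ ^ 2) hγ2 n (x ^ 2)
    field_simp
    linear_combination
      ((-γ) ^ n) * key
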